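/- An alternating automaton A is good for trees if and only if it is good for composition with one-player games, i.e., if and only if for every one-player Σ-arena R (possibly infinite), Eve has a winning strategy in the game on R with winning condition L(A) if and only if she has a winning strategy in the synchronized product R × A. -/

import Mathlib

set_option maxHeartbeats 1000000

namespace GFG

/-- Positive boolean formulas over `Q`. -/
inductive PB (Q : Type) : Type
  | atom : Q → PB Q
  | and : PB Q → PB Q → PB Q
  | or : PB Q → PB Q → PB Q

namespace PB
variable {Q R : Type}

/-- Satisfaction of a positive boolean formula by a truth assignment. -/
def sat : PB Q → (Q → Prop) → Prop
  | atom q, v => v q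
  | and b b', v => b.sat v ∧ b'.sat v
  | or b b', v => b.sat v ∨ b'.sat v

/-- Two positive boolean formulas are equivalent if they are satisfied by exactly
the same truth assignments. -/
def Equiv (b b' : PB Q) : Prop := ∀ v : Q → Prop, b.sat v ↔ b'.sat v

/-- Dualization: swap conjunctions and disjunctions. -/
def dual : PB Q → PB Q
  | atom q => atom q
  | and b b' => or b.dual b'.dual
  | or b b' => and b.dual b'.dual

/-- The formula is a conjunction of atoms. -/
def IsConj : PB Q → Prop
  | atom _ => True
  | and b b' => b.IsConj ∧ b'.IsConj
  | or _ _ => False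

/-- The formula is a disjunction of atoms. -/
def IsDisj : PB Q → Prop
  | atom _ => True
  | and _ _ => False
  | or b b' => b.IsDisj ∧ b'.IsDisj

/-- The formula is a single atom. -/
def IsAtom : PB Q → Prop
  | atom _ => True
  | _ => False

/-- The formula is in disjunctive normal form: a disjunction of conjunctions of atoms. -/
def IsDNF : PB Q → Prop
  | atom _ => True
  | and b b' => b.IsConj ∧ b'.IsConj
  | or b b' => b.IsDNF ∧ b'.IsDNF

/-- The set of atoms occurring in a formula. -/
def atomsOf : PB Q → Set Q
  | atom q => {q}
  | and b b' => b.atomsOf ∪ b'.atomsOf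
  | or b b' => b.atomsOf ∪ b'.atomsOf

/-- `some q` if the formula is the atom `q`, else `none`. -/
def theAtom? : PB Q → Option Q
  | atom q => some q
  | _ => none

/-- Substitution of formulas for atoms. -/
def bind : PB Q → (Q → PB R) → PB R
  | atom q, f => f q
  | and b b', f => and (b.bind f) (b'.bind f)
  | or b b', f => or (b.bind f) (b'.bind f)

/-- The list of subformulas of a formula. -/
def subs : PB Q → List (PB Q)
  | atom q => [atom q]
  | and b b' => and b b' :: (b.subs ++ b'.subs)
  | or b b' => or b b' :: (b.subs ++ b'.subs)

end PB

/-- A deterministic parity automaton over the alphabet `Γ`. -/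
structure DPA (Γ : Type) : Type 1 where
  P : Type
  [finP : Finite P]
  [neP : Nonempty P]
  p0 : P
  eta : P → Γ → P
  c : P → ℕ

attribute [instance] DPA.finP DPA.neP

/-- The run of a deterministic parity automaton on an infinite word. -/
def DPA.run {Γ : Type} (D : DPA Γ) (x : ℕ → Γ) : ℕ → D.P
  | 0 => D.p0
  | n + 1 => D.eta (D.run x n) (x n)

/-- A deterministic parity automaton accepts `x` iff the largest priority seen
infinitely often along the run is even. -/
def DPA.Accepts {Γ : Type} (D : DPA Γ) (x : ℕ → Γ) : Prop :=
  ∃ k, Even k ∧ {n | D.c (D.run x n) = k}.Infinite ∧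
    ∀ j, k < j → {n | D.c (D.run x n) = j}.Finite

/-- A set of infinite words over `Γ` is ω-regular iff it is recognized by some
deterministic parity automaton. -/
def OmegaRegular {Γ : Type} (W : Set (ℕ → Γ)) : Prop :=
  ∃ D : DPA Γ, ∀ x, x ∈ W ↔ D.Accepts x

/-- An alternating word automaton with states labeled into `Γ` and acceptance set
`W ⊆ Γ^ω`. -/
structure AltAutomaton (Sig Γ : Type) : Type 1 where
  Q : Type
  [finQ : Finite Q]
  [neQ : Nonempty Q]
  init : Q
  delta : Q → Sig → PB Q
  label : Q → Γ
  W : Set (ℕ → Γ)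

attribute [instance] AltAutomaton.finQ AltAutomaton.neQ

/-- A two-player win/lose game of infinite duration, given by a move relation,
ownership of positions (`eve p` iff `p` belongs to Eve), an initial position, and
a winning condition for Eve on plays. -/
structure Game (Pos : Type) where
  move : Pos → Pos → Prop
  eve : Pos → Prop
  init : Pos
  win : (ℕ → Pos) → Prop

namespace Game
variable {Pos : Type} (G : Game Pos)

/-- A play: an infinite sequence of successive positions starting at the initial position. -/
def IsPlay (p : ℕ → Pos) : Prop := p 0 = G.init ∧ ∀ n, G.move (p n) (p (n + 1))

/-- The history of a play up to (and including) time `n`. -/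
def histOf (p : ℕ → Pos) (n : ℕ) : List Pos := (List.range (n + 1)).map p

/-- A valid finite history: a finite sequence of successive positions from the
initial position. -/
def IsHist (l : List Pos) : Prop := l.head? = some G.init ∧ l.Chain' G.move

/-- The play `p` agrees with the strategy `σ` of Eve. -/
def AgreesE (σ : List Pos → Pos) (p : ℕ → Pos) : Prop :=
  ∀ n, G.eve (p n) → p (n + 1) = σ (histOf p n)

/-- The play `p` agrees with the strategy `σ` of Adam. -/
def AgreesA (σ : List Pos → Pos) (p : ℕ → Pos) : Prop :=
  ∀ n, ¬ G.eve (p n) → p (n + 1) = σ (histOf p n)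

/-- `σ` is a winning strategy for Eve: it proposes legal moves at all of Eve's
positions reachable along valid histories, and every play agreeing with it is won by Eve. -/
def WinsEve (σ : List Pos → Pos) : Prop :=
  (∀ (l : List Pos) (x : Pos), G.IsHist (l ++ [x]) → G.eve x → G.move x (σ (l ++ [x]))) ∧
  (∀ p, G.IsPlay p → G.AgreesE σ p → G.win p)

/-- `σ` is a winning strategy for Adam. -/
def WinsAdam (σ : List Pos → Pos) : Prop :=
  (∀ (l : List Pos) (x : Pos), G.IsHist (l ++ [x]) → ¬ G.eve x → G.move x (σ (l ++ [x]))) ∧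
  (∀ p, G.IsPlay p → G.AgreesA σ p → ¬ G.win p)

/-- Eve has a winning strategy in `G`. -/
def EveWins : Prop := ∃ σ, G.WinsEve σ

/-- Adam has a winning strategy in `G`. -/
def AdamWins : Prop := ∃ σ, G.WinsAdam σ

end Game

/-- `s` is the subsequence of values selected by `sel` along `p`,
in order and exhaustively. -/
def IsSubseqOn {X Y : Type} (sel : X → Option Y) (p : ℕ → X) (s : ℕ → Y) : Prop :=
  ∃ ix : ℕ → ℕ, StrictMono ix ∧ (∀ n, sel (p (ix n)) = some (s n)) ∧
    ∀ m, (sel (p m)).isSome → ∃ n, ix n = m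

variable {Sig Gam : Type}

/-- Moves of the model-checking game `G(w, A)`. -/
def mcMove (A : AltAutomaton Sig Gam) (w : ℕ → Sig) :
    (ℕ × PB A.Q) → (ℕ × PB A.Q) → Prop
  | (i, PB.atom q), (j, b) => j = i + 1 ∧ b = A.delta q (w i)
  | (i, PB.and b b'), (j, c) => j = i ∧ (c = b ∨ c = b')
  | (i, PB.or b b'), (j, c) => j = i ∧ (c = b ∨ c = b')

/-- The model-checking (membership) game `G(w, A)`. Disjunction positions belong to Eve;
conjunction and atom positions (the latter having a unique successor) belong to Adam.
Eve wins a play iff its state-sequence satisfies the acceptance condition. -/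
def mcGame (A : AltAutomaton Sig Gam) (w : ℕ → Sig) : Game (ℕ × PB A.Q) where
  move := mcMove A w
  eve := fun p => match p.2 with
    | PB.or _ _ => True
    | _ => False
  init := (0, PB.atom A.init)
  win := fun p => ∀ ρ : ℕ → A.Q, IsSubseqOn (fun x => x.2.theAtom?) p ρ →
    (fun n => A.label (ρ n)) ∈ A.W

/-- `A` accepts `w` iff Eve has a winning strategy in the model-checking game. -/
def AltAutomaton.Accepts (A : AltAutomaton Sig Gam) (w : ℕ → Sig) : Prop :=
  (mcGame A w).EveWins

/-- The language of `A`. -/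
def AltAutomaton.lang (A : AltAutomaton Sig Gam) : Set (ℕ → Sig) :=
  {w | A.Accepts w}

/-- A uniform strategy: a function of the word prefix read so far and the sequence of
transition conditions visited so far. -/
abbrev UStrat (Sig Q : Type) := List Sig → List (PB Q) → PB Q

/-- The prefix `w₀ … w_{i-1}` of an infinite word. -/
def wordPrefix (w : ℕ → Sig) (i : ℕ) : List Sig := (List.range i).map w

/-- The strategy in the model-checking game `G(w, A)` induced by following the uniform
strategy `τ` (at atom positions it takes the unique move). -/
def follow (A : AltAutomaton Sig Gam) (w : ℕ → Sig) (τ : UStrat Sig A.Q)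
    (hs : List (ℕ × PB A.Q)) : ℕ × PB A.Q :=
  match hs.getLast?.getD (0, PB.atom A.init) with
  | (i, PB.atom q) => (i + 1, A.delta q (w i))
  | (i, PB.and _ _) => (i, τ (wordPrefix w i) (hs.map Prod.snd))
  | (i, PB.or _ _) => (i, τ (wordPrefix w i) (hs.map Prod.snd))

/-- The nondeterminism in `A` is history-deterministic. -/
def NondetHD (A : AltAutomaton Sig Gam) : Prop :=
  ∃ τ : UStrat Sig A.Q, ∀ w ∈ A.lang, (mcGame A w).WinsEve (follow A w τ)

/-- The universality in `A` is history-deterministic. -/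
def UnivHD (A : AltAutomaton Sig Gam) : Prop :=
  ∃ τ : UStrat Sig A.Q, ∀ w ∉ A.lang, (mcGame A w).WinsAdam (follow A w τ)

/-- `A` is history-deterministic. -/
def HistoryDet (A : AltAutomaton Sig Gam) : Prop := NondetHD A ∧ UnivHD A

/-- Moves of the letter games: at an atom a letter is picked and the transition condition
is unfolded, at conjunctions and disjunctions a subformula is picked (with empty letter). -/
def letterMove (A : AltAutomaton Sig Gam) :
    (Option Sig × PB A.Q) → (Option Sig × PB A.Q) → Prop
  | (_, PB.atom q), (σ, b) => ∃ a : Sig, σ = some a ∧ b = A.delta q a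
  | (_, PB.and b b'), (σ, c) => σ = none ∧ (c = b ∨ c = b')
  | (_, PB.or b b'), (σ, c) => σ = none ∧ (c = b ∨ c = b')

/-- Eve's letter game: Adam picks the letters and resolves conjunctions, Eve resolves
disjunctions. Eve wins a play iff the word played is not in `L(A)` or the state-sequence
satisfies the acceptance condition. -/
def eveLetterGame (A : AltAutomaton Sig Gam) : Game (Option Sig × PB A.Q) where
  move := letterMove A
  eve := fun p => match p.2 with
    | PB.or _ _ => True
    | _ => False
  init := (none, PB.atom A.init)
  win := fun p => ∀ (w : ℕ → Sig) (ρ : ℕ → A.Q),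
    IsSubseqOn (fun x => x.1) p w → IsSubseqOn (fun x => x.2.theAtom?) p ρ →
    (w ∉ A.lang ∨ (fun n => A.label (ρ n)) ∈ A.W)

/-- Adam's letter game: Eve picks the letters and resolves disjunctions, Adam resolves
conjunctions. Adam wins a play iff the word played is in `L(A)` or the state-sequence does
not satisfy the acceptance condition (stated below as Eve's winning condition, negated). -/
def adamLetterGame (A : AltAutomaton Sig Gam) : Game (Option Sig × PB A.Q) where
  move := letterMove A
  eve := fun p => match p.2 with
    | PB.and _ _ => False
    | _ => True
  init := (none, PB.atom A.init)
  win := fun p => ∀ (w : ℕ → Sig) (ρ : ℕ → A.Q),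
    IsSubseqOn (fun x => x.1) p w → IsSubseqOn (fun x => x.2.theAtom?) p ρ →
    (w ∉ A.lang ∧ (fun n => A.label (ρ n)) ∈ A.W)

/-- The strategy in a letter game induced by following the uniform strategy `τ`. -/
def letterFollow (A : AltAutomaton Sig Gam) (τ : UStrat Sig A.Q)
    (hs : List (Option Sig × PB A.Q)) : Option Sig × PB A.Q :=
  (none, τ (hs.filterMap Prod.fst) (hs.map Prod.snd))

/-- The nondeterminism in `A` is compliant with the letter games. -/
def NondetCompliant (A : AltAutomaton Sig Gam) : Prop := (eveLetterGame A).EveWins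

/-- The universality in `A` is compliant with the letter games. -/
def UnivCompliant (A : AltAutomaton Sig Gam) : Prop := (adamLetterGame A).AdamWins

/-- `A` is compliant with the letter games. -/
def LetterCompliant (A : AltAutomaton Sig Gam) : Prop := NondetCompliant A ∧ UnivCompliant A

/-- A `Sig`-arena. -/
structure Arena (Sig : Type) : Type 1 where
  V : Type
  X : V → V → Prop
  VE : V → Prop
  C : V → Sig
  v0 : V
  total : ∀ v, ∃ v', X v v'

/-- The game on the arena `R` with winning condition `L`. -/
def arenaGame (R : Arena Sig) (L : Set (ℕ → Sig)) : Game R.V where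
  move := R.X
  eve := R.VE
  init := R.v0
  win := fun p => (fun n => R.C (p n)) ∈ L

/-- Moves of the synchronized product `R × A`. -/
def prodMove (R : Arena Sig) (A : AltAutomaton Sig Gam) :
    (R.V × PB A.Q) → (R.V × PB A.Q) → Prop
  | (v, PB.atom q), (v', b) => R.X v v' ∧ b = A.delta q (R.C v')
  | (v, PB.and b b'), (v', c) => v' = v ∧ (c = b ∨ c = b')
  | (v, PB.or b b'), (v', c) => v' = v ∧ (c = b ∨ c = b')

/-- The synchronized product game `R × A`. -/
def prodGame (R : Arena Sig) (A : AltAutomaton Sig Gam) : Game (R.V × PB A.Q) where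
  move := prodMove R A
  eve := fun p => match p.2 with
    | PB.atom _ => R.VE p.1
    | PB.or _ _ => True
    | PB.and _ _ => False
  init := (R.v0, A.delta A.init (R.C R.v0))
  win := fun p => ∀ ρ : ℕ → A.Q, IsSubseqOn (fun x => x.2.theAtom?) p ρ →
    (fun n => A.label (ρ n)) ∈ A.W

/-- `A` is good for game composition. -/
def GoodForGames (A : AltAutomaton Sig Gam) : Prop :=
  ∀ R : Arena Sig, ((arenaGame R A.lang).EveWins ↔ (prodGame R A).EveWins)

/-- The composition `B × A` of an automaton `B` with `Sig`-labeled states with the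
automaton `A` over `Sig`. -/
def compose {Sig' : Type} (B : AltAutomaton Sig' Sig) (A : AltAutomaton Sig Gam) :
    AltAutomaton Sig' Gam where
  Q := B.Q × A.Q
  init := (B.init, A.init)
  delta := fun p a => (B.delta p.1 a).bind fun qB' =>
    (A.delta p.2 (B.label qB')).bind fun qA' => PB.atom (qB', qA')
  label := fun p => A.label p.2
  W := A.W

/-- `A` is good for automata composition: composing with any alternating automaton `B`
whose acceptance condition is `L(A)` preserves the language. -/
def GoodForAutomata (A : AltAutomaton Sig Gam) : Prop :=
  ∀ (Sig' : Type) (B : AltAutomaton Sig' Sig), B.W = A.lang →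
    (compose B A).lang = B.lang

/-- The underlying graph of the arena is a tree rooted at the initial node: every node is
reached from the root by a unique path. -/
def Arena.IsTree (R : Arena Sig) : Prop :=
  ∀ v : R.V, ∃! l : List R.V,
    l.head? = some R.v0 ∧ l.getLast? = some v ∧ l.Chain' R.X

/-- The arena with ownership of positions reassigned. -/
def Arena.reassign (R : Arena Sig) (E : R.V → Prop) : Arena Sig :=
  { R with VE := E }

/-- A branch of (the tree underlying) an arena. -/
def Arena.Branch (R : Arena Sig) (p : ℕ → R.V) : Prop :=
  p 0 = R.v0 ∧ ∀ n, R.X (p n) (p (n + 1))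

/-- `R` is a one-player arena. -/
def Arena.OnePlayer (R : Arena Sig) : Prop := (∀ v, R.VE v) ∨ (∀ v, ¬ R.VE v)

/-- `A` is good for trees: its universal expansion accepts exactly the trees all of whose
branches are in `L(A)`, and its existential expansion accepts exactly the trees having a
branch in `L(A)`. -/
def GoodForTrees (A : AltAutomaton Sig Gam) : Prop :=
  ∀ R : Arena Sig, R.IsTree →
    (((prodGame (R.reassign fun _ => False) A).EveWins ↔
        ∀ p : ℕ → R.V, R.Branch p → (fun n => R.C (p n)) ∈ A.lang) ∧
     ((prodGame (R.reassign fun _ => True) A).EveWins ↔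
        ∃ p : ℕ → R.V, R.Branch p ∧ (fun n => R.C (p n)) ∈ A.lang))

/-- `A` is nondeterministic: all transition conditions are disjunctions of atoms. -/
def AltAutomaton.IsNondet (A : AltAutomaton Sig Gam) : Prop :=
  ∀ q a, (A.delta q a).IsDisj

/-- `A` is universal: all transition conditions are conjunctions of atoms. -/
def AltAutomaton.IsUniv (A : AltAutomaton Sig Gam) : Prop :=
  ∀ q a, (A.delta q a).IsConj

/-- `A` is deterministic: all transition conditions are atoms. -/
def AltAutomaton.IsDet (A : AltAutomaton Sig Gam) : Prop :=
  ∀ q a, (A.delta q a).IsAtom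

/-- The Büchi acceptance set over `Bool`-labelings: `true` occurs infinitely often. -/
def BuchiW : Set (ℕ → Bool) := {x | {n | x n = true}.Infinite}

/-- The co-Büchi acceptance set over `Bool`-labelings: `false` occurs finitely often. -/
def CoBuchiW : Set (ℕ → Bool) := {x | {n | x n = false}.Finite}

/-- The edge relation of the graph induced by the transition function. -/
def edgeRel (A : AltAutomaton Sig Gam) (q q' : A.Q) : Prop :=
  ∃ a, q' ∈ (A.delta q a).atomsOf

/-- A Büchi automaton (with `Bool` labels) is weak if in every strongly connected component
all states have the same label. -/
def IsWeak (A : AltAutomaton Sig Bool) : Prop :=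
  ∀ q q', Relation.ReflTransGen (edgeRel A) q q' → Relation.ReflTransGen (edgeRel A) q' q →
    A.label q = A.label q'

end GFG
namespace GFG

section Aux

variable {Sig Gam : Type}

theorem exists_concat_of_getLast? {α : Type} {l : List α} {x : α}
    (h : l.getLast? = some x) : ∃ l', l = l' ++ [x] :=
  ⟨l.dropLast, (List.dropLast_append_getLast? x h).symm⟩

theorem head?_append_left {α : Type} {l : List α} (l' : List α) (h : l ≠ []) :
    (l ++ l').head? = l.head? := by
  cases l with
  | nil => exact absurd rfl h
  | cons a t => simp

namespace Game
variable {Pos : Type}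

theorem histOf_succ (p : ℕ → Pos) (n : ℕ) :
    histOf p (n + 1) = histOf p n ++ [p (n + 1)] := by
  simp [histOf, List.range_succ]

theorem histOf_zero (p : ℕ → Pos) : histOf p 0 = [p 0] := by
  simp [histOf, List.range_succ]

theorem histOf_getLast? (p : ℕ → Pos) (n : ℕ) :
    (histOf p n).getLast? = some (p n) := by
  cases n with
  | zero => simp [histOf_zero]
  | succ n => rw [histOf_succ]; exact List.getLast?_concat

theorem histOf_head? (p : ℕ → Pos) (n : ℕ) :
    (histOf p n).head? = some (p 0) := by
  induction n with
  | zero => simp [histOf_zero]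
  | succ n ih =>
    rw [histOf_succ, head?_append_left]
    · exact ih
    · rintro h
      have := histOf_getLast? p n
      rw [h] at this; simp at this

variable (G : Game Pos)

theorem isHist_histOf {p : ℕ → Pos} (hp : G.IsPlay p) (n : ℕ) :
    G.IsHist (histOf p n) := by
  induction n with
  | zero =>
    exact ⟨by rw [histOf_zero]; simp [hp.1], by rw [histOf_zero]; exact List.isChain_singleton _⟩
  | succ n ih =>
    constructor
    · rw [histOf_succ, head?_append_left]
      · exact (histOf_head? p n).trans (by rw [hp.1])
      · rintro h
        have := histOf_getLast? p n
        rw [h] at this; simp at this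
    · rw [histOf_succ]
      refine List.isChain_append.2 ⟨ih.2, List.isChain_singleton _, ?_⟩
      intro x hx y hy
      rw [histOf_getLast? p n] at hx
      simp at hx hy
      subst hx; subst hy
      exact hp.2 n

theorem move_of_hist_chain {M : Pos → Pos → Prop} {p : ℕ → Pos} {n : ℕ}
    (h : (histOf p (n + 1)).Chain' M) : M (p n) (p (n + 1)) := by
  rw [histOf_succ] at h
  exact (List.isChain_append.1 h).2.2 _ (histOf_getLast? p n) _ rfl

theorem winsEve_move {σ : List Pos → Pos} (hσ : G.WinsEve σ) {H : List Pos} {X : Pos}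
    (hH : G.IsHist H) (hl : H.getLast? = some X) (he : G.eve X) :
    G.move X (σ H) := by
  obtain ⟨L, rfl⟩ := exists_concat_of_getLast? hl
  exact hσ.1 L X hH he

end Game

theorem isSubseqOn_congr {X X' Y : Type} {sel : X → Option Y} {sel' : X' → Option Y}
    {p : ℕ → X} {p' : ℕ → X'} (h : ∀ n, sel (p n) = sel' (p' n)) (s : ℕ → Y) :
    IsSubseqOn sel p s ↔ IsSubseqOn sel' p' s := by
  constructor <;> rintro ⟨ix, h1, h2, h3⟩
  · exact ⟨ix, h1, fun n => (h (ix n)).symm ▸ h2 n, fun m hm => h3 m (by rw [h m]; exact hm)⟩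
  · exact ⟨ix, h1, fun n => (h (ix n)) ▸ h2 n, fun m hm => h3 m (by rw [← h m]; exact hm)⟩

theorem allAdam_eveWins (R : Arena Sig) (L : Set (ℕ → Sig)) (h : ∀ v, ¬ R.VE v) :
    (arenaGame R L).EveWins ↔ ∀ p, R.Branch p → (fun n => R.C (p n)) ∈ L := by
  constructor
  · rintro ⟨σ, hσ⟩ p hp
    exact hσ.2 p hp (fun n hn => absurd hn (h _))
  · intro hall
    exact ⟨fun _ => R.v0, fun l x _ hx => absurd hx (h _), fun p hp _ => hall p hp⟩

theorem allEve_eveWins (R : Arena Sig) (L : Set (ℕ → Sig)) (h : ∀ v, R.VE v) :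
    (arenaGame R L).EveWins ↔ ∃ p, R.Branch p ∧ (fun n => R.C (p n)) ∈ L := by
  classical
  set G := arenaGame R L with hG
  constructor
  · rintro ⟨σ, hσ⟩
    set H : ℕ → List R.V := fun n => Nat.rec [R.v0] (fun _ Hn => Hn ++ [σ Hn]) n with hH
    set p : ℕ → R.V := fun n => (H n).getLast?.getD R.v0 with hp
    have hH0 : H 0 = [R.v0] := rfl
    have hHsucc : ∀ n, H (n + 1) = H n ++ [σ (H n)] := fun n => rfl
    have hp0 : p 0 = R.v0 := rfl
    have hpsucc' : ∀ n, p (n + 1) = σ (H n) := by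
      intro n
      show (H (n + 1)).getLast?.getD R.v0 = σ (H n)
      rw [hHsucc n, List.getLast?_concat]
      rfl
    have hhist : ∀ n, Game.histOf p n = H n := by
      intro n
      induction n with
      | zero => rw [Game.histOf_zero, hH0, hp0]
      | succ n ih =>
        rw [Game.histOf_succ, ih, hHsucc n, hpsucc' n]
    have hpsucc : ∀ n, p (n + 1) = σ (Game.histOf p n) := by
      intro n; rw [hhist n]; exact hpsucc' n
    have key : ∀ n, G.IsHist (Game.histOf p n) := by
      intro n
      induction n with
      | zero =>
        refine ⟨?_, by rw [Game.histOf_zero]; exact List.isChain_singleton _⟩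
        rw [Game.histOf_zero]
        show some (p 0) = some G.init
        rw [hp0]; rfl
      | succ n ih =>
        have hmv : G.move (p n) (p (n + 1)) := by
          rw [hpsucc n]
          exact Game.winsEve_move G hσ ih (Game.histOf_getLast? p n) (h _)
        constructor
        · rw [Game.histOf_succ, head?_append_left]
          · exact ih.1
          · rintro hc
            have := Game.histOf_getLast? p n
            rw [hc] at this; simp at this
        · rw [Game.histOf_succ]
          refine List.isChain_append.2 ⟨ih.2, List.isChain_singleton _, ?_⟩
          intro x hx y hy
          rw [Game.histOf_getLast? p n] at hx
          simp at hx hy; subst hx; subst hy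
          exact hmv
    have hmoves : ∀ n, G.move (p n) (p (n + 1)) := by
      intro n
      rw [hpsucc n]
      exact Game.winsEve_move G hσ (key n) (Game.histOf_getLast? p n) (h _)
    have hplay : G.IsPlay p := ⟨hp0, hmoves⟩
    exact ⟨p, hplay, hσ.2 p hplay (fun n _ => hpsucc n)⟩
  · rintro ⟨p, hbr, hwin⟩
    refine ⟨fun m => if m = Game.histOf p (m.length - 1) then p m.length
      else Classical.choose (R.total (m.getLast?.getD R.v0)), ?_, ?_⟩
    · intro l x hH hx
      beta_reduce
      by_cases hc : l ++ [x] = Game.histOf p ((l ++ [x]).length - 1)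
      · rw [if_pos hc]
        have hlen : (l ++ [x]).length - 1 = l.length := by simp
        have hx' : x = p l.length := by
          have h1 : (l ++ [x]).getLast? = some x := List.getLast?_concat
          rw [hc, hlen, Game.histOf_getLast?] at h1
          exact (Option.some.inj h1).symm
        have hlen2 : (l ++ [x]).length = l.length + 1 := by simp
        rw [hlen2, hx']
        exact hbr.2 l.length
      · rw [if_neg hc]
        have hgd : (l ++ [x]).getLast?.getD R.v0 = x := by rw [List.getLast?_concat]; rfl
        rw [hgd]
        exact Classical.choose_spec (R.total x)
    · intro q hq hagr
      have hqp : ∀ n, q n = p n := by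
        intro n
        induction n using Nat.strong_induction_on with
        | _ n ih =>
          match n with
          | 0 =>
            rw [hq.1, hbr.1]; rfl
          | (n + 1) =>
            have hhq : Game.histOf q n = Game.histOf p n := by
              simp only [Game.histOf]
              exact List.map_congr_left fun a ha =>
                ih a (List.mem_range.1 ha)
            have hlen : (Game.histOf p n).length = n + 1 := by simp [Game.histOf]
            rw [hagr n (h _), hhq]
            beta_reduce
            rw [if_pos (by rw [hlen]; simp), hlen]
      have heq : (fun n => R.C (q n)) = fun n => R.C (p n) := funext fun n => by rw [hqp n]
      show (fun n => R.C (q n)) ∈ L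
      rw [heq]; exact hwin

end Aux
section Unravel

variable {Sig Gam : Type}

open scoped Classical in
noncomputable def uStep (R : Arena Sig) (u v : R.V) : R.V :=
  if R.X u v then v else Classical.choose (R.total u)

theorem uStep_spec (R : Arena Sig) (u v : R.V) : R.X u (uStep R u v) := by
  unfold uStep
  split
  · assumption
  · exact Classical.choose_spec (R.total u)

theorem uStep_eq (R : Arena Sig) {u v : R.V} (h : R.X u v) : uStep R u v = v := by
  unfold uStep
  rw [if_pos h]

noncomputable def runFrom (R : Arena Sig) : R.V → List R.V → R.V
  | u, [] => u
  | u, v :: l => runFrom R (uStep R u v) l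

noncomputable def run (R : Arena Sig) (l : List R.V) : R.V := runFrom R R.v0 l

theorem runFrom_append (R : Arena Sig) (u : R.V) (l l' : List R.V) :
    runFrom R u (l ++ l') = runFrom R (runFrom R u l) l' := by
  induction l generalizing u with
  | nil => rfl
  | cons v t ih => simp [runFrom, ih]

theorem run_concat (R : Arena Sig) (l : List R.V) (v : R.V) :
    run R (l ++ [v]) = uStep R (run R l) v := by
  simp [run, runFrom_append, runFrom]

theorem run_concat_spec (R : Arena Sig) (l : List R.V) (v : R.V) :
    R.X (run R l) (run R (l ++ [v])) := by
  rw [run_concat]; exact uStep_spec R _ v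

theorem run_concat_of_X (R : Arena Sig) {l : List R.V} {v : R.V} (h : R.X (run R l) v) :
    run R (l ++ [v]) = v := by
  rw [run_concat]; exact uStep_eq R h

@[reducible] noncomputable def unr (R : Arena Sig) : Arena Sig where
  V := List R.V
  X := fun l l' => ∃ v, l' = l ++ [v]
  VE := fun l => R.VE (run R l)
  C := fun l => R.C (run R l)
  v0 := []
  total := fun l => ⟨l ++ [R.v0], R.v0, rfl⟩

theorem run_nil (R : Arena Sig) : run R [] = R.v0 := rfl

theorem chain_prefix_aux {α : Type} :
    ∀ M : List (List α), M.Chain' (fun a b => ∃ v, b = a ++ [v]) → ∀ a b,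
      M.head? = some a → M.getLast? = some b → a <+: b := by
  intro M
  induction M with
  | nil => intro _ a b ha _; simp at ha
  | cons x M ih =>
    cases M with
    | nil =>
      intro _ a b ha hb
      simp at ha hb
      subst ha; subst hb
      exact List.prefix_rfl
    | cons y M' =>
      intro hc a b ha hb
      have h1 := (List.isChain_cons_cons.1 hc).1
      obtain ⟨v, rfl⟩ := h1
      have ha' : x = a := by simpa using ha
      subst ha'
      have hb' : ((x ++ [v]) :: M').getLast? = some b := by
        rw [← hb]; exact (List.getLast?_cons_cons ..).symm
      exact (List.prefix_append x [v]).trans (ih (List.isChain_cons_cons.1 hc).2 _ b rfl hb')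

theorem tree_of_ext {α : Type} :
    ∀ l : List α, ∃! L : List (List α),
      L.head? = some [] ∧ L.getLast? = some l ∧
      L.Chain' (fun a b => ∃ v, b = a ++ [v]) := by
  intro l
  induction l using List.reverseRecOn with
  | nil =>
    refine ⟨[[]], ⟨rfl, rfl, List.isChain_singleton _⟩, ?_⟩
    rintro M ⟨h1, h2, h3⟩
    cases M with
    | nil => simp at h1
    | cons a M' =>
      have ha : a = [] := by simpa using h1
      subst ha
      cases M' with
      | nil => rfl
      | cons y M'' =>
        obtain ⟨v, rfl⟩ := (List.isChain_cons_cons.1 h3).1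
        have hb : ((([] : List α) ++ [v]) :: M'').getLast? = some [] := by
          rw [← h2]; exact (List.getLast?_cons_cons ..).symm
        have := chain_prefix_aux _ (List.isChain_cons_cons.1 h3).2 _ _ rfl hb
        simp at this
  | append_singleton l v ih =>
    obtain ⟨L₀, ⟨h01, h02, h03⟩, h0u⟩ := ih
    have hL₀ne : L₀ ≠ [] := by rintro rfl; simp at h02
    refine ⟨L₀ ++ [l ++ [v]], ⟨?_, List.getLast?_concat, ?_⟩, ?_⟩
    · rw [head?_append_left _ hL₀ne]; exact h01
    · refine List.isChain_append.2 ⟨h03, List.isChain_singleton _, ?_⟩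
      intro x hx y hy
      rw [h02] at hx
      simp at hx hy
      subst hx; subst hy
      exact ⟨v, rfl⟩
    · rintro M ⟨m1, m2, m3⟩
      obtain ⟨M', rfl⟩ := exists_concat_of_getLast? m2
      cases M' with
      | nil =>
        exfalso
        simp at m1
      | cons a M'' =>
        have hne : a :: M'' ≠ [] := List.cons_ne_nil _ _
        have hch := List.isChain_append.1 m3
        have hlast : (a :: M'').getLast? = some ((a :: M'').getLast hne) :=
          List.getLast?_eq_getLast hne
        have hlink := hch.2.2 _ hlast _ rfl
        obtain ⟨w, hw⟩ := hlink
        have hinj := List.append_inj' hw rfl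
        have hm : (a :: M'').getLast hne = l := hinj.1.symm
        have : a :: M'' = L₀ := by
          apply h0u
          refine ⟨?_, ?_, hch.1⟩
          · rw [← m1]; exact (head?_append_left _ hne).symm
          · rw [hlast, hm]
        rw [this]

theorem unr_isTree (R : Arena Sig) : (unr R).IsTree := fun l => tree_of_ext (α := R.V) l

end Unravel
section Transfer

variable {Sig Gam : Type} (R : Arena Sig) (A : AltAutomaton Sig Gam)

/-- Projection from positions of the product game over the unraveling to positions of the
product game over the original arena. -/
noncomputable def projP (x : List R.V × PB A.Q) : R.V × PB A.Q := (run R x.1, x.2)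

theorem proj_init : projP R A (prodGame (unr R) A).init = (prodGame R A).init := rfl

theorem eve_corr (X : List R.V × PB A.Q) :
    (prodGame (unr R) A).eve X ↔ (prodGame R A).eve (projP R A X) := by
  rcases X with ⟨l, b⟩
  cases b <;> simp [prodGame, unr, projP]

theorem proj_move {X Y : List R.V × PB A.Q} (h : (prodGame (unr R) A).move X Y) :
    (prodGame R A).move (projP R A X) (projP R A Y) := by
  rcases X with ⟨l, b⟩
  rcases Y with ⟨l', c⟩
  cases b with
  | atom q =>
    obtain ⟨⟨v, rfl⟩, hc⟩ := h
    exact ⟨run_concat_spec R l v, hc⟩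
  | and b b' =>
    obtain ⟨rfl, hc⟩ := h
    exact ⟨rfl, hc⟩
  | or b b' =>
    obtain ⟨rfl, hc⟩ := h
    exact ⟨rfl, hc⟩

theorem proj_isHist {H : List (List R.V × PB A.Q)} (h : (prodGame (unr R) A).IsHist H) :
    (prodGame R A).IsHist (H.map (projP R A)) := by
  constructor
  · have h1 : H.head? = some (prodGame (unr R) A).init := h.1
    rw [List.head?_map, h1]
    rfl
  · exact List.isChain_map_of_isChain _ (fun a b hab => proj_move R A hab) h.2

/-- Canonical lifting of a move of the product game over `R` to the unraveling. -/
noncomputable def canonical (X : List R.V × PB A.Q) (y : R.V × PB A.Q) :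
    List R.V × PB A.Q :=
  match X.2 with
  | PB.atom _ => (X.1 ++ [y.1], y.2)
  | _ => (X.1, y.2)

theorem canonical_proj {X : List R.V × PB A.Q} {y : R.V × PB A.Q}
    (h : (prodGame R A).move (projP R A X) y) :
    projP R A (canonical R A X y) = y := by
  rcases X with ⟨l, b⟩
  rcases y with ⟨v', c⟩
  cases b with
  | atom q =>
    obtain ⟨h1, _⟩ := h
    simp only [canonical, projP]
    rw [run_concat_of_X R h1]
  | and b b' =>
    obtain ⟨h1, _⟩ := h
    simp only [canonical, projP]
    rw [h1]
  | or b b' =>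
    obtain ⟨h1, _⟩ := h
    simp only [canonical, projP]
    rw [h1]

theorem canonical_move {X : List R.V × PB A.Q} {y : R.V × PB A.Q}
    (h : (prodGame R A).move (projP R A X) y) :
    (prodGame (unr R) A).move X (canonical R A X y) := by
  rcases X with ⟨l, b⟩
  rcases y with ⟨v', c⟩
  cases b with
  | atom q =>
    obtain ⟨h1, h2⟩ := h
    refine ⟨⟨v', rfl⟩, ?_⟩
    show c = A.delta q (R.C (run R (l ++ [v'])))
    rw [run_concat_of_X R h1]
    exact h2
  | and b b' => exact ⟨rfl, h.2⟩
  | or b b' => exact ⟨rfl, h.2⟩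

/-- Default product-game position over the unraveling. -/
noncomputable def dfltT : List R.V × PB A.Q := ([], PB.atom A.init)

open scoped Classical in
/-- One step of lifting a history of the product game over `R` to the unraveling,
following `σT` where possible. -/
noncomputable def liftNext (σT : List (List R.V × PB A.Q) → List R.V × PB A.Q)
    (L : List (List R.V × PB A.Q)) (y : R.V × PB A.Q) : List R.V × PB A.Q :=
  if L = [] then ([], y.2)
  else if (prodGame (unr R) A).eve (L.getLast?.getD (dfltT R A)) ∧ projP R A (σT L) = y
    then σT L
  else canonical R A (L.getLast?.getD (dfltT R A)) y

noncomputable def liftRev (σT : List (List R.V × PB A.Q) → List R.V × PB A.Q) :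
    List (R.V × PB A.Q) → List (List R.V × PB A.Q)
  | [] => []
  | y :: h => liftNext R A σT (liftRev σT h).reverse y :: liftRev σT h

/-- Lifting of histories of the product game over `R` to the unraveling. -/
noncomputable def liftH (σT : List (List R.V × PB A.Q) → List R.V × PB A.Q)
    (h : List (R.V × PB A.Q)) : List (List R.V × PB A.Q) :=
  (liftRev R A σT h.reverse).reverse

theorem liftH_nil (σT : List (List R.V × PB A.Q) → List R.V × PB A.Q) :
    liftH R A σT [] = [] := rfl

theorem liftH_concat (σT : List (List R.V × PB A.Q) → List R.V × PB A.Q)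
    (h : List (R.V × PB A.Q)) (y : R.V × PB A.Q) :
    liftH R A σT (h ++ [y]) = liftH R A σT h ++ [liftNext R A σT (liftH R A σT h) y] := by
  simp [liftH, liftRev]

theorem liftH_singleton (σT : List (List R.V × PB A.Q) → List R.V × PB A.Q)
    (y : R.V × PB A.Q) :
    liftH R A σT [y] = [([], y.2)] := by
  have := liftH_concat R A σT [] y
  simp only [List.nil_append, liftH_nil] at this
  rw [this]
  simp [liftNext]

theorem lift_inv {σT : List (List R.V × PB A.Q) → List R.V × PB A.Q}
    (hσT : (prodGame (unr R) A).WinsEve σT) :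
    ∀ h x, (prodGame R A).IsHist h → h.getLast? = some x →
      (prodGame (unr R) A).IsHist (liftH R A σT h) ∧
      ∃ X, (liftH R A σT h).getLast? = some X ∧ projP R A X = x := by
  intro h
  induction h using List.reverseRecOn with
  | nil => intro x _ hx; simp at hx
  | append_singleton h y ih =>
    intro x' hh hx
    rw [List.getLast?_concat] at hx
    obtain rfl : y = x' := Option.some.inj hx
    cases h with
    | nil =>
      have hy : y = (prodGame R A).init := by
        have := hh.1
        simpa using this
      rw [show ([] : List (R.V × PB A.Q)) ++ [y] = [y] from rfl, liftH_singleton]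
      refine ⟨⟨?_, List.isChain_singleton _⟩, ([], y.2), rfl, ?_⟩
      · show some (([] : List R.V), y.2) = some (prodGame (unr R) A).init
        rw [hy]; rfl
      · show (run R [], y.2) = y
        rw [hy]; rfl
    | cons a h' =>
      have hne : a :: h' ≠ [] := List.cons_ne_nil _ _
      have hh' : (prodGame R A).IsHist (a :: h') := by
        refine ⟨?_, (List.isChain_append.1 hh.2).1⟩
        rw [← hh.1]
        exact (head?_append_left _ hne).symm
      have hz : (a :: h').getLast? = some ((a :: h').getLast hne) :=
        List.getLast?_eq_getLast hne
      set z := (a :: h').getLast hne with hzdef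
      have hmv : (prodGame R A).move z y :=
        (List.isChain_append.1 hh.2).2.2 _ hz _ rfl
      obtain ⟨hT, X, hX, hpX⟩ := ih z hh' hz
      have hLne : liftH R A σT (a :: h') ≠ [] := by
        rintro hc; rw [hc] at hX; simp at hX
      rw [liftH_concat]
      set nxt := liftNext R A σT (liftH R A σT (a :: h')) y with hnxt
      have hmove_new : (prodGame (unr R) A).move X nxt ∧ projP R A nxt = y := by
        rw [hnxt]
        unfold liftNext
        rw [if_neg hLne]
        rw [hX]
        show _ ∧ _
        split_ifs with hcond
        · exact ⟨Game.winsEve_move _ hσT hT hX hcond.1, hcond.2⟩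
        · have hmv' : (prodGame R A).move (projP R A X) y := by rw [hpX]; exact hmv
          exact ⟨canonical_move R A hmv', canonical_proj R A hmv'⟩
      refine ⟨⟨?_, ?_⟩, nxt, List.getLast?_concat, hmove_new.2⟩
      · rw [head?_append_left _ hLne]
        exact hT.1
      · refine List.isChain_append.2 ⟨hT.2, List.isChain_singleton _, ?_⟩
        intro u hu w hw
        rw [hX] at hu
        simp at hu hw
        subst hu; subst hw
        exact hmove_new.1

end Transfer
section Transfer2

variable {Sig Gam : Type} (R : Arena Sig) (A : AltAutomaton Sig Gam)

theorem transfer_mp (hT : (prodGame (unr R) A).EveWins) : (prodGame R A).EveWins := by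
  obtain ⟨σT, hσT⟩ := hT
  refine ⟨fun h => projP R A (σT (liftH R A σT h)), ?_, ?_⟩
  · intro l x hH hx
    obtain ⟨hTH, X, hXl, hpX⟩ :=
      lift_inv R A hσT (l ++ [x]) x hH (List.getLast?_concat)
    have he : (prodGame (unr R) A).eve X := (eve_corr R A X).2 (by rw [hpX]; exact hx)
    have hmv := Game.winsEve_move _ hσT hTH hXl he
    have hmv2 := proj_move R A hmv
    rw [hpX] at hmv2
    exact hmv2
  · intro p hp hagree
    set P : ℕ → List R.V × PB A.Q :=
      fun n => (liftH R A σT (Game.histOf p n)).getLast?.getD (dfltT R A) with hP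
    have histP : ∀ n, Game.histOf P n = liftH R A σT (Game.histOf p n) := by
      intro n
      induction n with
      | zero =>
        rw [Game.histOf_zero, Game.histOf_zero, liftH_singleton]
        have : P 0 = ([], (p 0).2) := by
          rw [hP]
          show (liftH R A σT (Game.histOf p 0)).getLast?.getD _ = _
          rw [Game.histOf_zero, liftH_singleton]
          rfl
        rw [this]
      | succ n ih =>
        have hPn1 : P (n + 1) = liftNext R A σT (liftH R A σT (Game.histOf p n)) (p (n + 1)) := by
          show (liftH R A σT (Game.histOf p (n+1))).getLast?.getD _ = _
          rw [Game.histOf_succ, liftH_concat, List.getLast?_concat]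
          rfl
        rw [Game.histOf_succ P n, Game.histOf_succ p n, ih, liftH_concat, hPn1]
    have inv : ∀ n, (prodGame (unr R) A).IsHist (Game.histOf P n) ∧
        projP R A (P n) = p n := by
      intro n
      obtain ⟨h1, X, h2, h3⟩ := lift_inv R A hσT (Game.histOf p n) (p n)
        (Game.isHist_histOf _ hp n) (Game.histOf_getLast? p n)
      rw [← histP n] at h1 h2
      rw [Game.histOf_getLast?] at h2
      have hXP : X = P n := (Option.some.inj h2).symm
      exact ⟨h1, hXP ▸ h3⟩
    have hPplay : (prodGame (unr R) A).IsPlay P := by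
      constructor
      · have h1 := (inv 0).1.1
        rw [Game.histOf_head?] at h1
        exact Option.some.inj h1
      · intro n
        exact Game.move_of_hist_chain ((inv (n + 1)).1.2)
    have hPagree : (prodGame (unr R) A).AgreesE σT P := by
      intro n he
      have hev : (prodGame R A).eve (p n) := by
        rw [← (inv n).2]
        exact (eve_corr R A (P n)).1 he
      have hpn1 : p (n + 1) = projP R A (σT (liftH R A σT (Game.histOf p n))) :=
        hagree n hev
      have hPn1 : P (n + 1) = liftNext R A σT (liftH R A σT (Game.histOf p n)) (p (n + 1)) := by
        rw [hP]
        show (liftH R A σT (Game.histOf p (n+1))).getLast?.getD _ = _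
        rw [Game.histOf_succ, liftH_concat, List.getLast?_concat]
        rfl
      have hLne : liftH R A σT (Game.histOf p n) ≠ [] := by
        rw [← histP n]
        rintro hc
        have := Game.histOf_getLast? P n
        rw [hc] at this; simp at this
      have hgd : (liftH R A σT (Game.histOf p n)).getLast?.getD (dfltT R A) = P n := by
        rw [← histP n, Game.histOf_getLast?]
        rfl
      rw [hPn1]
      unfold liftNext
      rw [if_neg hLne, hgd, if_pos ⟨he, hpn1.symm⟩, histP n]
    have hwin := hσT.2 P hPplay hPagree
    intro ρ hsub
    refine hwin ρ ?_
    refine (isSubseqOn_congr (fun n => ?_) ρ).1 hsub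
    have := (inv n).2
    show (p n).2.theAtom? = (P n).2.theAtom?
    rw [← this]
    rfl
  
theorem transfer_mpr (hR : (prodGame R A).EveWins) : (prodGame (unr R) A).EveWins := by
  obtain ⟨σR, hσR⟩ := hR
  refine ⟨fun H => canonical R A (H.getLast?.getD (dfltT R A)) (σR (H.map (projP R A))), ?_, ?_⟩
  · intro L X hH hx
    have hRH := proj_isHist R A hH
    rw [List.map_append] at hRH
    simp only [List.map_cons, List.map_nil] at hRH
    have hmv : (prodGame R A).move (projP R A X)
        (σR (L.map (projP R A) ++ [projP R A X])) :=
      hσR.1 (L.map (projP R A)) (projP R A X) hRH ((eve_corr R A X).1 hx)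
    beta_reduce
    simp only [List.getLast?_concat, Option.getD_some, List.map_append, List.map_cons,
      List.map_nil]
    exact canonical_move R A hmv
  · intro P hP hagr
    set p : ℕ → R.V × PB A.Q := fun n => projP R A (P n) with hp
    have hpplay : (prodGame R A).IsPlay p := by
      constructor
      · show projP R A (P 0) = _
        rw [hP.1]
        rfl
      · intro n
        exact proj_move R A (hP.2 n)
    have hmap : ∀ n, Game.histOf p n = (Game.histOf P n).map (projP R A) := by
      intro n
      simp only [Game.histOf, List.map_map]
      rfl
    have hagree' : (prodGame R A).AgreesE σR p := by
      intro n he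
      have heT : (prodGame (unr R) A).eve (P n) := (eve_corr R A (P n)).2 he
      have h1 := hagr n heT
      have hmv : (prodGame R A).move (projP R A (P n)) (σR (Game.histOf p n)) := by
        apply Game.winsEve_move _ hσR (Game.isHist_histOf _ hpplay n) ?_ he
        exact Game.histOf_getLast? p n
      show projP R A (P (n + 1)) = _
      rw [h1]
      beta_reduce
      simp only [Game.histOf_getLast?, Option.getD_some]
      rw [← hmap n]
      exact canonical_proj R A hmv
    have hwin := hσR.2 p hpplay hagree'
    intro ρ hsub
    refine hwin ρ ?_
    exact (isSubseqOn_congr (fun n => rfl) ρ).1 hsub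

theorem transfer_iff : (prodGame (unr R) A).EveWins ↔ (prodGame R A).EveWins :=
  ⟨transfer_mp R A, transfer_mpr R A⟩

end Transfer2
section Final

variable {Sig Gam : Type}

theorem branch_forall (R : Arena Sig) (S : Set (ℕ → Sig)) :
    (∀ q, (unr R).Branch q → (fun n => (unr R).C (q n)) ∈ S) ↔
    (∀ p, R.Branch p → (fun n => R.C (p n)) ∈ S) := by
  constructor
  · intro h p hp
    set q : ℕ → List R.V := fun n => Nat.rec [] (fun k qk => qk ++ [p (k + 1)]) n with hqd
    have hq0 : q 0 = [] := rfl
    have hqsucc : ∀ n, q (n + 1) = q n ++ [p (n + 1)] := fun n => rfl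
    have hrun : ∀ n, run R (q n) = p n := by
      intro n
      induction n with
      | zero => rw [hq0, run_nil, hp.1]
      | succ n ih =>
        rw [hqsucc n]
        exact run_concat_of_X R (by rw [ih]; exact hp.2 n)
    have hbq : (unr R).Branch q := ⟨hq0, fun n => ⟨p (n + 1), hqsucc n⟩⟩
    have hmem := h q hbq
    have heq : (fun n => (unr R).C (q n)) = fun n => R.C (p n) :=
      funext fun n => by show R.C (run R (q n)) = R.C (p n); rw [hrun n]
    rw [← heq]
    exact hmem
  · intro h q hq
    have hbp : R.Branch (fun n => run R (q n)) := by
      constructor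
      · show run R (q 0) = R.v0
        rw [hq.1]; rfl
      · intro n
        obtain ⟨v, hv⟩ := hq.2 n
        show R.X (run R (q n)) (run R (q (n + 1)))
        rw [hv]
        exact run_concat_spec R _ _
    exact h _ hbp

theorem branch_exists (R : Arena Sig) (S : Set (ℕ → Sig)) :
    (∃ q, (unr R).Branch q ∧ (fun n => (unr R).C (q n)) ∈ S) ↔
    (∃ p, R.Branch p ∧ (fun n => R.C (p n)) ∈ S) := by
  constructor
  · rintro ⟨q, hq, hmem⟩
    refine ⟨fun n => run R (q n), ⟨by show run R (q 0) = R.v0; rw [hq.1]; rfl, ?_⟩, hmem⟩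
    intro n
    obtain ⟨v, hv⟩ := hq.2 n
    show R.X (run R (q n)) (run R (q (n + 1)))
    rw [hv]
    exact run_concat_spec R _ _
  · rintro ⟨p, hp, hmem⟩
    set q : ℕ → List R.V := fun n => Nat.rec [] (fun k qk => qk ++ [p (k + 1)]) n with hqd
    have hq0 : q 0 = [] := rfl
    have hqsucc : ∀ n, q (n + 1) = q n ++ [p (n + 1)] := fun n => rfl
    have hrun : ∀ n, run R (q n) = p n := by
      intro n
      induction n with
      | zero => rw [hq0, run_nil, hp.1]
      | succ n ih =>
        rw [hqsucc n]
        exact run_concat_of_X R (by rw [ih]; exact hp.2 n)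
    refine ⟨q, ⟨hq0, fun n => ⟨p (n + 1), hqsucc n⟩⟩, ?_⟩
    have heq : (fun n => (unr R).C (q n)) = fun n => R.C (p n) :=
      funext fun n => by show R.C (run R (q n)) = R.C (p n); rw [hrun n]
    rw [heq]
    exact hmem

theorem reassign_eq {R : Arena Sig} {E : R.V → Prop} (h : ∀ v, R.VE v ↔ E v) :
    R.reassign E = R := by
  rw [show E = R.VE from funext fun v => propext (h v).symm]
  rfl

end Final
/-- An alternating automaton is good for trees iff it is good for
composition with one-player games (possibly with infinite arenas). -/
theorem statement7 {Sig Gam : Type} [Fintype Sig] [Nonempty Sig] [Fintype Gam] [Nonempty Gam]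
    (A : AltAutomaton Sig Gam) (hreg : OmegaRegular A.W) :
    GoodForTrees A ↔
      ∀ R : Arena Sig, R.OnePlayer →
        ((arenaGame R A.lang).EveWins ↔ (prodGame R A).EveWins) := by
  constructor
  · intro hgft R hop
    have htree := hgft (unr R) (unr_isTree R)
    rcases hop with hE | hA
    · have hre : (unr R).reassign (fun _ => True) = unr R :=
        reassign_eq (fun l => ⟨fun _ => trivial, fun _ => hE _⟩)
      have h2 := htree.2
      rw [hre] at h2
      calc (arenaGame R A.lang).EveWins
          ↔ ∃ p, R.Branch p ∧ (fun n => R.C (p n)) ∈ A.lang := allEve_eveWins R A.lang hE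
        _ ↔ ∃ q, (unr R).Branch q ∧ (fun n => (unr R).C (q n)) ∈ A.lang :=
            (branch_exists R A.lang).symm
        _ ↔ (prodGame (unr R) A).EveWins := h2.symm
        _ ↔ (prodGame R A).EveWins := transfer_iff R A
    · have hre : (unr R).reassign (fun _ => False) = unr R :=
        reassign_eq (fun l => ⟨fun h => absurd h (hA _), False.elim⟩)
      have h1 := htree.1
      rw [hre] at h1
      calc (arenaGame R A.lang).EveWins
          ↔ ∀ p, R.Branch p → (fun n => R.C (p n)) ∈ A.lang := allAdam_eveWins R A.lang hA
        _ ↔ ∀ q, (unr R).Branch q → (fun n => (unr R).C (q n)) ∈ A.lang :=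
            (branch_forall R A.lang).symm
        _ ↔ (prodGame (unr R) A).EveWins := h1.symm
        _ ↔ (prodGame R A).EveWins := transfer_iff R A
  · intro hg R _
    constructor
    · have h1 := hg (R.reassign fun _ => False) (Or.inr fun _ h => h)
      have h2 := allAdam_eveWins (R.reassign fun _ => False) A.lang (fun _ h => h)
      exact h1.symm.trans h2
    · have h1 := hg (R.reassign fun _ => True) (Or.inl fun _ => trivial)
      have h2 := allEve_eveWins (R.reassign fun _ => True) A.lang (fun _ => trivial)
      exact h1.symm.trans h2

end GFG
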